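/- arXiv:2001.05420 — 4 statements merged into one kernel-verified Lean document; each statement's English description precedes it below -/
import Mathlib

section
/- Unified domain-of-attraction / Pickands–Balkema–de Haan theorem: Let F be a distribution function with upper end-point x₊ and let α ∈ ℝ. Then F ∈ D(G_α) if and only if there exists a function a, positive on (−∞, x₊), such that for every x with 1 + αx > 0 (every x ∈ ℝ when α = 0), F̄(t + x a(t))/F̄(t) → g_α(x) as t ↑ x₊; equivalently, the law of the scaled excess (X − u)/a(u) conditional on X > u converges to the generalised Pareto distribution H_α(x) := 1 − g_α(x) as u ↑ x₊. -/
open Filter Topology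

/-- A (cumulative) distribution function on ℝ. -/
def IsDistFun (F : ℝ → ℝ) : Prop :=
  Monotone F ∧ (∀ x, ContinuousWithinAt F (Set.Ici x) x) ∧
    Tendsto F atBot (𝓝 0) ∧ Tendsto F atTop (𝓝 1)

/-- `F` lies in the domain of attraction of `G`. -/
def MemDomAttr (F G : ℝ → ℝ) : Prop :=
  ∃ a b : ℕ → ℝ, (∀ n, 0 < a n) ∧
    ∀ x : ℝ, ContinuousAt G x →
      Tendsto (fun n => F (a n * x + b n) ^ n) atTop (𝓝 (G x))

/-- `g_α(x) = (1 + αx)^{-1/α}` for `α ≠ 0` (on `{x | 1 + αx > 0}`), and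
`g₀(x) = e^{-x}`. -/
noncomputable def gEVT (α x : ℝ) : ℝ :=
  if α = 0 then Real.exp (-x) else (1 + α * x) ^ (-1 / α)

/-- The extreme-value distribution `G_α`: `exp(-g_α(x))` where `1 + αx > 0`,
`0` to the left of that interval (case `α > 0`), `1` to its right
(case `α < 0`). -/
noncomputable def GEV (α x : ℝ) : ℝ :=
  if 0 < 1 + α * x then Real.exp (-gEVT α x)
  else if 0 < α then 0 else 1

open Classical in
/-- The filter of approach `t ↑ x₊` to the upper end-point of `F`. -/
noncomputable def upperEndFilter (F : ℝ → ℝ) : Filter ℝ :=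
  if BddAbove {x | F x < 1} then 𝓝[<] (sSup {x | F x < 1}) else atTop

namespace EVTAux

lemma g_pos {α x : ℝ} (hx : 0 < 1 + α * x) : 0 < gEVT α x := by
  unfold gEVT; split
  · exact Real.exp_pos _
  · exact Real.rpow_pos_of_pos hx _

lemma g_zero (α : ℝ) : gEVT α 0 = 1 := by
  unfold gEVT; split <;> simp

lemma g_contAt {α x : ℝ} (hx : 0 < 1 + α * x) : ContinuousAt (gEVT α) x := by
  unfold gEVT; split
  · exact (Real.continuous_exp.comp continuous_neg).continuousAt
  · refine ContinuousAt.rpow_const ?_ (Or.inl hx.ne')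
    exact (continuous_const.add (continuous_const.mul continuous_id)).continuousAt

lemma g_gt_one {α x : ℝ} (hx0 : x < 0) (hx : 0 < 1 + α * x) : 1 < gEVT α x := by
  unfold gEVT; split_ifs with h
  · rw [show (1:ℝ) = Real.exp 0 by simp]
    exact Real.exp_lt_exp.2 (by linarith)
  · rcases lt_or_gt_of_ne h with hneg | hpos
    · rw [Real.one_lt_rpow_iff_of_pos hx]
      exact Or.inl ⟨by nlinarith, div_pos_of_neg_of_neg (by norm_num) hneg⟩
    · rw [Real.one_lt_rpow_iff_of_pos hx]
      exact Or.inr ⟨by nlinarith, div_neg_of_neg_of_pos (by norm_num) hpos⟩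

lemma g_lt_one {α x : ℝ} (hx0 : 0 < x) (hx : 0 < 1 + α * x) : gEVT α x < 1 := by
  unfold gEVT; split_ifs with h
  · rw [show (1:ℝ) = Real.exp 0 by simp]
    exact Real.exp_lt_exp.2 (by linarith)
  · rcases lt_or_gt_of_ne h with hneg | hpos
    · rw [Real.rpow_lt_one_iff_of_pos hx]
      exact Or.inr ⟨by nlinarith, div_pos_of_neg_of_neg (by norm_num) hneg⟩
    · rw [Real.rpow_lt_one_iff_of_pos hx]
      exact Or.inl ⟨by nlinarith, div_neg_of_neg_of_pos (by norm_num) hpos⟩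

/-- Solve `gEVT α x = v` for any `v > 0`. -/
lemma g_solve {α : ℝ} (v : ℝ) (hv : 0 < v) :
    ∃ x : ℝ, 0 < 1 + α * x ∧ gEVT α x = v := by
  rcases eq_or_ne α 0 with h0 | h0
  · refine ⟨-Real.log v, by simp [h0], ?_⟩
    simp [gEVT, h0, Real.exp_log hv]
  · refine ⟨(v ^ (-α) - 1) / α, ?_, ?_⟩
    · have : 1 + α * ((v ^ (-α) - 1) / α) = v ^ (-α) := by field_simp; ring
      rw [this]; exact Real.rpow_pos_of_pos hv _
    · have h1 : 1 + α * ((v ^ (-α) - 1) / α) = v ^ (-α) := by field_simp; ring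
      rw [gEVT, if_neg h0, h1, ← Real.rpow_mul hv.le,
        show -α * (-1 / α) = 1 by field_simp, Real.rpow_one]

lemma GEV_eq_exp {α x : ℝ} (hx : 0 < 1 + α * x) : GEV α x = Real.exp (-gEVT α x) := by
  rw [GEV, if_pos hx]

lemma GEV_mem_Ioo {α x : ℝ} (hx : 0 < 1 + α * x) : 0 < GEV α x ∧ GEV α x < 1 := by
  rw [GEV_eq_exp hx]
  constructor
  · exact Real.exp_pos _
  · rw [show (1:ℝ) = Real.exp 0 by simp]
    exact Real.exp_lt_exp.2 (by simpa using g_pos hx)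

lemma GEV_contAt {α x : ℝ} (hx : 0 < 1 + α * x) : ContinuousAt (GEV α) x := by
  have hopen : IsOpen {y : ℝ | 0 < 1 + α * y} :=
    isOpen_lt continuous_const (continuous_const.add (continuous_const.mul continuous_id))
  have heq : GEV α =ᶠ[𝓝 x] fun y => Real.exp (-gEVT α y) := by
    filter_upwards [hopen.mem_nhds hx] with y hy
    exact GEV_eq_exp hy
  refine ContinuousAt.congr ?_ heq.symm
  exact (Real.continuous_exp.continuousAt).comp ((g_contAt hx).neg)

/-- Simple `ε`-criterion for convergence. -/
lemma tendsto_of_abs_le {f : ℝ → ℝ} {l : Filter ℝ} {c : ℝ}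
    (h : ∀ ε : ℝ, 0 < ε → ∀ᶠ t in l, |f t - c| ≤ ε) : Tendsto f l (𝓝 c) := by
  rw [Metric.tendsto_nhds]
  intro ε hε
  filter_upwards [h (ε/2) (by linarith)] with t ht
  rw [Real.dist_eq]
  linarith

lemma tendsto_of_abs_le_nat {f : ℕ → ℝ} {c : ℝ}
    (h : ∀ ε : ℝ, 0 < ε → ∀ᶠ n in atTop, |f n - c| ≤ ε) : Tendsto f atTop (𝓝 c) := by
  rw [Metric.tendsto_nhds]
  intro ε hε
  filter_upwards [h (ε/2) (by linarith)] with t ht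
  rw [Real.dist_eq]
  linarith

/-- If `n * uₙ → c` with `uₙ ≥ 0`, then `(1 - uₙ)ⁿ → exp (-c)`. -/
lemma pow_tendsto_exp {u : ℕ → ℝ} {c : ℝ} (h0 : ∀ᶠ n in atTop, 0 ≤ u n)
    (h : Tendsto (fun n : ℕ => (n : ℝ) * u n) atTop (𝓝 c)) :
    Tendsto (fun n => (1 - u n) ^ n) atTop (𝓝 (Real.exp (-c))) := by
  have hu0 : Tendsto u atTop (𝓝 0) := by
    have h1 : Tendsto (fun n : ℕ => ((n:ℝ) * u n) * ((n:ℝ))⁻¹) atTop (𝓝 (c * 0)) :=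
      h.mul tendsto_inv_atTop_nhds_zero_nat
    rw [mul_zero] at h1
    refine h1.congr' ?_
    filter_upwards [eventually_ge_atTop 1] with n hn
    have : (n:ℝ) ≠ 0 := by positivity
    field_simp
  have hhalf : ∀ᶠ n in atTop, 0 ≤ u n ∧ u n ≤ 1/2 := by
    filter_upwards [h0, hu0.eventually (eventually_le_nhds (by norm_num : (0:ℝ) < 1/2))] with n h1 h2
    exact ⟨h1, h2⟩
  -- lower bound : exp (-(n * (u n / (1 - u n)))) ≤ (1 - u n)^n
  have hlow : Tendsto (fun n : ℕ => Real.exp (-((n:ℝ) * (u n / (1 - u n))))) atTop (𝓝 (Real.exp (-c))) := by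
    refine Real.continuous_exp.continuousAt.tendsto.comp ?_
    refine Tendsto.neg ?_
    have : Tendsto (fun n : ℕ => ((n:ℝ) * u n) * (1 - u n)⁻¹) atTop (𝓝 (c * (1 - 0)⁻¹)) :=
      h.mul (((tendsto_const_nhds.sub hu0).inv₀ (by norm_num)))
    simp only [sub_zero, inv_one, mul_one] at this
    refine this.congr ?_
    intro n; rw [mul_assoc, div_eq_mul_inv]
  have hhigh : Tendsto (fun n : ℕ => Real.exp (-((n:ℝ) * u n))) atTop (𝓝 (Real.exp (-c))) :=
    Real.continuous_exp.continuousAt.tendsto.comp h.neg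
  refine tendsto_of_tendsto_of_tendsto_of_le_of_le' hlow hhigh ?_ ?_
  · filter_upwards [hhalf] with n ⟨h1, h2⟩
    have hu1 : u n < 1 := by linarith
    have ht : 0 ≤ u n / (1 - u n) := div_nonneg h1 (by linarith)
    have key : Real.exp (-(u n / (1 - u n))) ≤ 1 - u n := by
      have h3 : 1 + u n / (1 - u n) ≤ Real.exp (u n / (1 - u n)) := by
        have := Real.add_one_le_exp (u n / (1 - u n)); linarith
      have h4 : 1 + u n / (1 - u n) = (1 - u n)⁻¹ := by
        rw [inv_eq_one_div, eq_div_iff (by linarith : (1:ℝ) - u n ≠ 0), add_mul,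
          div_mul_cancel₀ _ (by linarith : (1:ℝ) - u n ≠ 0)]; ring
      rw [Real.exp_neg]
      rw [h4] at h3
      have h5 : 0 < (1 - u n)⁻¹ := inv_pos.2 (by linarith)
      calc (Real.exp (u n / (1 - u n)))⁻¹ ≤ ((1 - u n)⁻¹)⁻¹ := by
            exact inv_anti₀ (by linarith) h3
        _ = 1 - u n := by rw [inv_inv]
    calc Real.exp (-((n:ℝ) * (u n / (1 - u n))))
        = Real.exp (-(u n / (1 - u n))) ^ n := by
          rw [← Real.exp_nat_mul]; ring_nf
      _ ≤ (1 - u n) ^ n := by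
          exact pow_le_pow_left₀ (Real.exp_nonneg _) key n
  · filter_upwards [hhalf] with n ⟨h1, h2⟩
    have key : 1 - u n ≤ Real.exp (-u n) := by
      have := Real.add_one_le_exp (-u n); linarith
    calc (1 - u n) ^ n ≤ Real.exp (-u n) ^ n := by
          exact pow_le_pow_left₀ (by linarith) key n
      _ = Real.exp (-((n:ℝ) * u n)) := by rw [← Real.exp_nat_mul]; ring_nf

/-- If `vₙⁿ → L ∈ (0,1)` with `vₙ ≥ 0`, then `vₙ → 1` and `n (1 - vₙ) → - log L`. -/
lemma of_pow_tendsto {v : ℕ → ℝ} {L : ℝ} (hL0 : 0 < L) (hL1 : L < 1)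
    (hv0 : ∀ᶠ n in atTop, 0 ≤ v n)
    (h : Tendsto (fun n => v n ^ n) atTop (𝓝 L)) :
    Tendsto v atTop (𝓝 1) ∧
      Tendsto (fun n : ℕ => (n : ℝ) * (1 - v n)) atTop (𝓝 (-Real.log L)) := by
  have hvpos : ∀ᶠ n in atTop, 0 < v n := by
    filter_upwards [hv0, h.eventually (eventually_gt_nhds hL0), eventually_ge_atTop 1]
      with n h1 h2 h3
    rcases h1.lt_or_eq with h4 | h4
    · exact h4
    · exfalso; rw [← h4, zero_pow (by omega)] at h2; linarith
  have hlog : Tendsto (fun n : ℕ => (n:ℝ) * Real.log (v n)) atTop (𝓝 (Real.log L)) := by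
    have hcont : ContinuousAt Real.log L := Real.continuousAt_log hL0.ne'
    have := hcont.tendsto.comp h
    refine this.congr' ?_
    filter_upwards [hvpos] with n hn
    simp [Function.comp, Real.log_pow]
  have hlogv : Tendsto (fun n => Real.log (v n)) atTop (𝓝 0) := by
    have h1 : Tendsto (fun n : ℕ => ((n:ℝ) * Real.log (v n)) * ((n:ℝ))⁻¹) atTop
        (𝓝 (Real.log L * 0)) := hlog.mul tendsto_inv_atTop_nhds_zero_nat
    rw [mul_zero] at h1
    refine h1.congr' ?_
    filter_upwards [eventually_ge_atTop 1] with n hn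
    have : (n:ℝ) ≠ 0 := by positivity
    field_simp
  have hv1 : Tendsto v atTop (𝓝 1) := by
    have := Real.continuous_exp.continuousAt.tendsto.comp hlogv
    rw [Real.exp_zero] at this
    refine this.congr' ?_
    filter_upwards [hvpos] with n hn
    simp [Function.comp, Real.exp_log hn]
  refine ⟨hv1, ?_⟩
  have hnl : Tendsto (fun n : ℕ => (n:ℝ) * (-Real.log (v n))) atTop (𝓝 (-Real.log L)) := by
    simpa [mul_neg] using hlog.neg
  have hvnl : Tendsto (fun n => v n * ((n:ℝ) * (-Real.log (v n)))) atTop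
      (𝓝 (1 * -Real.log L)) := hv1.mul hnl
  rw [one_mul] at hvnl
  refine tendsto_of_tendsto_of_tendsto_of_le_of_le' hvnl hnl ?_ ?_
  · filter_upwards [hvpos] with n hn
    -- v * n * (-log v) ≤ n (1 - v)  since -log v ≤ (1-v)/v
    have key : -Real.log (v n) ≤ (1 - v n) / v n := by
      have := Real.log_le_sub_one_of_pos (inv_pos.2 hn)
      rw [Real.log_inv] at this
      have h2 : (v n)⁻¹ - 1 = (1 - v n) / v n := by field_simp
      linarith [h2 ▸ this]
    have hn' : (0:ℝ) ≤ n := Nat.cast_nonneg n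
    calc v n * ((n:ℝ) * (-Real.log (v n))) ≤ v n * ((n:ℝ) * ((1 - v n)/ v n)) := by
          apply mul_le_mul_of_nonneg_left _ hn.le
          exact mul_le_mul_of_nonneg_left key hn'
      _ = (n:ℝ) * (1 - v n) := by field_simp
  · filter_upwards [hvpos] with n hn
    have key : 1 - v n ≤ -Real.log (v n) := by
      have := Real.log_le_sub_one_of_pos hn; linarith
    exact mul_le_mul_of_nonneg_left key (Nat.cast_nonneg n)



section DistBasics

variable {F : ℝ → ℝ}

lemma F_le_one (hF : IsDistFun F) (x : ℝ) : F x ≤ 1 := by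
  refine ge_of_tendsto hF.2.2.2 ?_
  filter_upwards [eventually_ge_atTop x] with y hy
  exact hF.1 hy

lemma F_nonneg (hF : IsDistFun F) (x : ℝ) : 0 ≤ F x := by
  refine le_of_tendsto hF.2.2.1 ?_
  filter_upwards [eventually_le_atBot x] with y hy
  exact hF.1 hy

lemma S_nonempty (hF : IsDistFun F) : {x | F x < 1}.Nonempty := by
  have := hF.2.2.1.eventually (eventually_lt_nhds (by norm_num : (0:ℝ) < 1))
  rcases this.exists with ⟨x, hx⟩
  exact ⟨x, hx⟩

lemma S_lowerset (hF : IsDistFun F) {x y : ℝ} (hy : y ≤ x) (hx : F x < 1) : F y < 1 :=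
  lt_of_le_of_lt (hF.1 hy) hx

lemma F_lt_one_of_lt_csSup (hF : IsDistFun F) (hb : BddAbove {x | F x < 1})
    {t : ℝ} (ht : t < sSup {x | F x < 1}) : F t < 1 := by
  obtain ⟨s, hs, hts⟩ := exists_lt_of_lt_csSup (S_nonempty hF) ht
  exact S_lowerset hF hts.le hs

lemma F_eq_one_of_gt_csSup (hF : IsDistFun F) (hb : BddAbove {x | F x < 1})
    {t : ℝ} (ht : sSup {x | F x < 1} < t) : F t = 1 := by
  by_contra h
  have : F t < 1 := lt_of_le_of_ne (F_le_one hF t) h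
  exact absurd (le_csSup hb this) (not_le.2 ht)

lemma F_csSup_eq_one (hF : IsDistFun F) (hb : BddAbove {x | F x < 1}) :
    F (sSup {x | F x < 1}) = 1 := by
  set m := sSup {x | F x < 1}
  have h1 : Tendsto F (𝓝[>] m) (𝓝 (F m)) :=
    (hF.2.1 m).mono_left (nhdsWithin_mono _ Set.Ioi_subset_Ici_self)
  have h2 : Tendsto F (𝓝[>] m) (𝓝 1) := by
    refine Tendsto.congr' ?_ tendsto_const_nhds
    filter_upwards [self_mem_nhdsWithin] with t (ht : m < t)
    exact (F_eq_one_of_gt_csSup hF hb ht).symm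
  exact tendsto_nhds_unique h1 h2

lemma uef_neBot (hF : IsDistFun F) : (upperEndFilter F).NeBot := by
  unfold upperEndFilter
  split
  · infer_instance
  · infer_instance

lemma eventually_F_lt_one (hF : IsDistFun F) : ∀ᶠ t in upperEndFilter F, F t < 1 := by
  unfold upperEndFilter
  split_ifs with hb
  · filter_upwards [self_mem_nhdsWithin] with t (ht : t < _)
    exact F_lt_one_of_lt_csSup hF hb ht
  · refine Eventually.of_forall fun t => ?_
    by_contra h
    refine hb ⟨t, fun s hs => ?_⟩
    by_contra hst
    exact absurd (lt_of_le_of_lt (hF.1 (not_le.1 hst).le) hs) (by linarith [F_le_one hF t, not_lt.1 (fun hh => h hh)])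

end DistBasics

section Stage3

variable {F : ℝ → ℝ} {α : ℝ}

lemma uef_eq_of_bdd (hb : BddAbove {x | F x < 1}) :
    upperEndFilter F = 𝓝[<] (sSup {x | F x < 1}) := by
  simp [upperEndFilter, hb]

lemma uef_eq_of_unbdd (hb : ¬ BddAbove {x | F x < 1}) :
    upperEndFilter F = atTop := by
  simp [upperEndFilter, hb]

lemma F_le_csSup_image (hF : IsDistFun F) (hb : BddAbove {x | F x < 1}) {t : ℝ}
    (ht : t < sSup {x | F x < 1}) :
    F t ≤ sSup (F '' Set.Iio (sSup {x | F x < 1})) :=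
  le_csSup ⟨1, fun y ⟨s, _, hs⟩ => hs ▸ F_le_one hF s⟩ ⟨t, ht, rfl⟩

lemma csSup_image_le_one (hF : IsDistFun F) {m : ℝ} :
    sSup (F '' Set.Iio m) ≤ 1 :=
  csSup_le ((Set.nonempty_Iio).image F) (fun y ⟨s, _, hs⟩ => hs ▸ F_le_one hF s)

/-- In the bounded case, `F ∈ D(GEV α)` forces `F(x₊⁻) = 1`. -/
lemma csSup_image_eq_one_of_dom (hF : IsDistFun F) (hb : BddAbove {x | F x < 1})
    (hD : MemDomAttr F (GEV α)) :
    sSup (F '' Set.Iio (sSup {x | F x < 1})) = 1 := by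
  set m := sSup {x | F x < 1} with hm
  set c := sSup (F '' Set.Iio m) with hc
  refine le_antisymm (csSup_image_le_one hF) ?_
  by_contra hlt
  have hc1 : c < 1 := not_le.1 hlt
  obtain ⟨a, b, hapos, hconv⟩ := hD
  have hdom0 : (0:ℝ) < 1 + α * 0 := by norm_num
  have h0 := hconv 0 (GEV_contAt hdom0)
  have hGEV0 : GEV α 0 = Real.exp (-1) := by
    rw [GEV_eq_exp hdom0, g_zero]
  rw [hGEV0] at h0
  have hL0 : (0:ℝ) < Real.exp (-1) := Real.exp_pos _
  have hL1 : Real.exp (-1) < 1 := by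
    rw [show (1:ℝ) = Real.exp 0 by simp]; exact Real.exp_lt_exp.2 (by norm_num)
  have hv := of_pow_tendsto hL0 hL1
      (Eventually.of_forall fun n => F_nonneg hF _) h0
  have hv1 : Tendsto (fun n => F (a n * 0 + b n)) atTop (𝓝 1) := hv.1
  have hev : ∀ᶠ n in atTop, F (a n * 0 + b n) ^ n = 1 := by
    filter_upwards [hv1.eventually (eventually_gt_nhds hc1)] with n hn
    have h1 : F (a n * 0 + b n) = 1 := by
      rcases lt_trichotomy (a n * 0 + b n) m with h | h | h
      · exact absurd (F_le_csSup_image hF hb h) (not_le.2 hn)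
      · rw [h]; exact F_csSup_eq_one hF hb
      · exact F_eq_one_of_gt_csSup hF hb h
    rw [h1, one_pow]
  have : Tendsto (fun _ : ℕ => (1:ℝ)) atTop (𝓝 (Real.exp (-1))) := h0.congr' hev
  have := tendsto_nhds_unique this tendsto_const_nhds
  linarith

/-- In the bounded case, the POT condition forces `F(x₊⁻) = 1`. -/
lemma csSup_image_eq_one_of_pot (hF : IsDistFun F) (hb : BddAbove {x | F x < 1})
    {A : ℝ → ℝ}
    (hr : ∀ x : ℝ, 0 < 1 + α * x →
      Tendsto (fun t => (1 - F (t + x * A t)) / (1 - F t)) (upperEndFilter F)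
        (𝓝 (gEVT α x))) :
    sSup (F '' Set.Iio (sSup {x | F x < 1})) = 1 := by
  set m := sSup {x | F x < 1} with hm
  set c := sSup (F '' Set.Iio m) with hc
  refine le_antisymm (csSup_image_le_one hF) ?_
  by_contra hlt
  have hc1 : c < 1 := not_le.1 hlt
  obtain ⟨x₀, hx₀dom, hx₀val⟩ := g_solve (α := α) (1/2) (by norm_num)
  have hr0 := hr x₀ hx₀dom
  rw [uef_eq_of_bdd hb, ← hm] at hr0
  rw [hx₀val] at hr0
  have hlim : Tendsto F (𝓝[<] m) (𝓝 c) := hF.1.tendsto_nhdsLT m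
  have E1 : ∀ᶠ t in 𝓝[<] m,
      |(1 - F (t + x₀ * A t)) / (1 - F t) - 1/2| < 1/4 := by
    have := Metric.tendsto_nhds.1 hr0 (1/4) (by norm_num)
    filter_upwards [this] with t ht
    rwa [Real.dist_eq] at ht
  have E3 : ∀ᶠ t in 𝓝[<] m, c - (1 - c)/3 < F t :=
    hlim.eventually (eventually_gt_nhds (by linarith))
  have E2 : ∀ᶠ t in 𝓝[<] m, t < m := self_mem_nhdsWithin
  have : ∀ᶠ t in 𝓝[<] m, False := by
    filter_upwards [E1, E2, E3] with t h1 h2 h3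
    rw [abs_lt] at h1
    have hFt : F t ≤ c := F_le_csSup_image hF hb h2
    have hden : 0 < 1 - F t := by linarith
    set s := t + x₀ * A t with hs
    rcases lt_trichotomy s m with hsm | hsm | hsm
    · -- F s ≤ c, numerator ≥ 1 - c
      have hnum : 1 - c ≤ 1 - F s := by linarith [F_le_csSup_image hF hb hsm]
      have h34 : (3:ℝ)/4 ≤ (1 - F s) / (1 - F t) := by
        rw [le_div_iff₀ hden]; nlinarith
      linarith
    · have : F s = 1 := hsm ▸ F_csSup_eq_one hF hb
      rw [this] at h1; norm_num at h1
    · have : F s = 1 := F_eq_one_of_gt_csSup hF hb hsm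
      rw [this] at h1; norm_num at h1
  have : (∅ : Set ℝ) ∈ 𝓝[<] m := by
    simpa [Filter.eventually_iff] using this
  exact absurd this (fun h => (nhdsLT_neBot m).ne' (empty_mem_iff_bot.1 h))

lemma tendsto_F_one_of_csSup (hF : IsDistFun F) (hb : BddAbove {x | F x < 1})
    (h1 : sSup (F '' Set.Iio (sSup {x | F x < 1})) = 1) :
    Tendsto F (upperEndFilter F) (𝓝 1) := by
  rw [uef_eq_of_bdd hb]
  have := hF.1.tendsto_nhdsLT (sSup {x | F x < 1})
  rwa [h1] at this

lemma tendsto_F_one_of_dom (hF : IsDistFun F) (hD : MemDomAttr F (GEV α)) :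
    Tendsto F (upperEndFilter F) (𝓝 1) := by
  by_cases hb : BddAbove {x | F x < 1}
  · exact tendsto_F_one_of_csSup hF hb (csSup_image_eq_one_of_dom hF hb hD)
  · rw [uef_eq_of_unbdd hb]; exact hF.2.2.2

lemma tendsto_F_one_of_pot (hF : IsDistFun F) {A : ℝ → ℝ}
    (hr : ∀ x : ℝ, 0 < 1 + α * x →
      Tendsto (fun t => (1 - F (t + x * A t)) / (1 - F t)) (upperEndFilter F)
        (𝓝 (gEVT α x))) :
    Tendsto F (upperEndFilter F) (𝓝 1) := by
  by_cases hb : BddAbove {x | F x < 1}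
  · exact tendsto_F_one_of_csSup hF hb (csSup_image_eq_one_of_pot hF hb hr)
  · rw [uef_eq_of_unbdd hb]; exact hF.2.2.2

lemma tendsto_tail_zero (hF : IsDistFun F) (h1 : Tendsto F (upperEndFilter F) (𝓝 1)) :
    Tendsto (fun t => 1 - F t) (upperEndFilter F) (𝓝[>] 0) := by
  refine tendsto_nhdsWithin_of_tendsto_nhds_of_eventually_within _ ?_ ?_
  · have := h1.const_sub 1
    simpa using this
  · filter_upwards [eventually_F_lt_one hF] with t ht
    simpa using ht

end Stage3

section CoreA

variable {F : ℝ → ℝ} {α : ℝ}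

lemma dom_open (α : ℝ) : IsOpen {y : ℝ | 0 < 1 + α * y} :=
  isOpen_lt continuous_const (continuous_const.add (continuous_const.mul continuous_id))

/-- Forward core: from the sequential tail limits to the POT tail-ratio limits. -/
lemma coreA (hF : IsDistFun F) (h1 : Tendsto F (upperEndFilter F) (𝓝 1))
    {a b : ℕ → ℝ} (hapos : ∀ n, 0 < a n)
    (hg : ∀ x : ℝ, 0 < 1 + α * x →
      Tendsto (fun n : ℕ => (n : ℝ) * (1 - F (a n * x + b n))) atTop (𝓝 (gEVT α x))) :
    ∃ A : ℝ → ℝ, (∀ t, F t < 1 → 0 < A t) ∧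
      ∀ x : ℝ, 0 < 1 + α * x →
        Tendsto (fun t => (1 - F (t + x * A t)) / (1 - F t)) (upperEndFilter F)
          (𝓝 (gEVT α x)) := by
  classical
  set l := upperEndFilter F with hl
  set N : ℝ → ℕ := fun t => ⌈(1 - F t)⁻¹⌉₊ with hNdef
  refine ⟨fun t => if F t < 1 then a (N t) else 1, ?_, ?_⟩
  · intro t ht
    simp only [if_pos ht]
    exact hapos _
  intro x hx
  set A : ℝ → ℝ := fun t => if F t < 1 then a (N t) else 1 with hAdef
  have htail : Tendsto (fun t => 1 - F t) l (𝓝[>] 0) := tendsto_tail_zero hF h1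
  have htail0 : Tendsto (fun t => 1 - F t) l (𝓝 0) :=
    htail.mono_right nhdsWithin_le_nhds
  have hinv : Tendsto (fun t => (1 - F t)⁻¹) l atTop := tendsto_inv_nhdsGT_zero.comp htail
  have hNr : Tendsto (fun t => (N t : ℝ)) l atTop :=
    tendsto_atTop_mono (fun t => Nat.le_ceil _) hinv
  have hN : Tendsto N l atTop := tendsto_natCast_atTop_iff.mp hNr
  have hFlt : ∀ᶠ t in l, F t < 1 := eventually_F_lt_one hF
  have hdN_lb : ∀ᶠ t in l, 1 ≤ (N t : ℝ) * (1 - F t) := by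
    filter_upwards [hFlt] with t ht
    have htp : 0 < 1 - F t := by linarith
    calc (1:ℝ) = (1 - F t)⁻¹ * (1 - F t) := by field_simp
      _ ≤ (N t : ℝ) * (1 - F t) :=
          mul_le_mul_of_nonneg_right (Nat.le_ceil _) htp.le
  have hdN : Tendsto (fun t => (N t : ℝ) * (1 - F t)) l (𝓝 1) := by
    have hub : ∀ᶠ t in l, (N t : ℝ) * (1 - F t) ≤ 1 + (1 - F t) := by
      filter_upwards [hFlt] with t ht
      have htp : 0 < 1 - F t := by linarith
      have hinvnn : (0:ℝ) ≤ (1 - F t)⁻¹ := by positivity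
      have := Nat.ceil_lt_add_one hinvnn
      calc (N t : ℝ) * (1 - F t) ≤ ((1 - F t)⁻¹ + 1) * (1 - F t) :=
            mul_le_mul_of_nonneg_right this.le htp.le
        _ = 1 + (1 - F t) := by field_simp
    have h1' : Tendsto (fun t => 1 + (1 - F t)) l (𝓝 1) := by
      have := htail0.const_add 1
      simpa using this
    exact tendsto_of_tendsto_of_tendsto_of_le_of_le' tendsto_const_nhds h1'
      hdN_lb hub
  -- ε-criterion
  haveI : l.NeBot := hl ▸ uef_neBot hF
  refine tendsto_of_abs_le ?_
  intro ε hε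
  have hgx := g_pos hx
  -- continuity data
  obtain ⟨ρ₁, hρ₁pos, hρ₁⟩ := Metric.continuousAt_iff.1 (g_contAt hx) (ε/4) (by linarith)
  obtain ⟨ρ₂, hρ₂pos, hρ₂⟩ := Metric.isOpen_iff.1 (dom_open α) x hx
  obtain ⟨ρ₃, hρ₃pos, hρ₃⟩ := Metric.isOpen_iff.1 (dom_open α) 0 (by norm_num)
  set σ := min (min (ρ₁/2) (ρ₂/2)) (ρ₃/2) with hσdef
  have hσpos : 0 < σ := by
    apply lt_min (lt_min _ _) <;> linarith
  have hσρ₁ : σ < ρ₁ := lt_of_le_of_lt (le_trans (min_le_left _ _) (min_le_left _ _)) (by linarith)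
  have hσρ₂ : σ < ρ₂ := lt_of_le_of_lt (le_trans (min_le_left _ _) (min_le_right _ _)) (by linarith)
  have hσρ₃ : σ < ρ₃ := lt_of_le_of_lt (min_le_right _ _) (by linarith)
  have hx'dom : 0 < 1 + α * (-σ) := by
    have : (-σ) ∈ Metric.ball (0:ℝ) ρ₃ := by
      simp [Real.dist_eq, abs_of_pos hσpos, hσρ₃]
    exact hρ₃ this
  have hx''dom : 0 < 1 + α * σ := by
    have : σ ∈ Metric.ball (0:ℝ) ρ₃ := by
      simp [Real.dist_eq, abs_of_pos hσpos, hσρ₃]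
    exact hρ₃ this
  have hxx'dom : 0 < 1 + α * (x + -σ) := by
    have : (x + -σ) ∈ Metric.ball x ρ₂ := by
      simp [Real.dist_eq, abs_of_pos hσpos, hσρ₂]
    exact hρ₂ this
  have hxx''dom : 0 < 1 + α * (x + σ) := by
    have : (x + σ) ∈ Metric.ball x ρ₂ := by
      simp [Real.dist_eq, abs_of_pos hσpos, hσρ₂]
    exact hρ₂ this
  have hgxx' : |gEVT α (x + -σ) - gEVT α x| < ε/4 := by
    have : dist (x + -σ) x < ρ₁ := by
      simp [Real.dist_eq, abs_of_pos hσpos]; linarith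
    have := hρ₁ this
    rwa [Real.dist_eq] at this
  have hgxx'' : |gEVT α (x + σ) - gEVT α x| < ε/4 := by
    have : dist (x + σ) x < ρ₁ := by
      simp [Real.dist_eq, abs_of_pos hσpos]; linarith
    have := hρ₁ this
    rwa [Real.dist_eq] at this
  rw [abs_lt] at hgxx' hgxx''
  have hgx' : 1 < gEVT α (-σ) := g_gt_one (by linarith) hx'dom
  have hgx'' : gEVT α σ < 1 := g_lt_one hσpos hx''dom
  set P := (1 + gEVT α (-σ))/2 with hPdef
  have hP1 : 1 < P := by simp only [hPdef]; linarith
  have hPg : P < gEVT α (-σ) := by simp only [hPdef]; linarith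
  set η := min ((P - 1)/2) (ε/(2*(gEVT α x + 1))) with hηdef
  have hηpos : 0 < η := by
    apply lt_min
    · linarith
    · positivity
  have hηP : 1 + η < P := by
    have : η ≤ (P-1)/2 := min_le_left _ _
    linarith
  have hηε : η ≤ ε/(2*(gEVT α x + 1)) := min_le_right _ _
  -- eventual facts in n
  have hE : ∀ᶠ n : ℕ in atTop,
      P < (n:ℝ) * (1 - F (a n * (-σ) + b n)) ∧
      (n:ℝ) * (1 - F (a n * σ + b n)) < 1 ∧
      (n:ℝ) * (1 - F (a n * (x + -σ) + b n)) < gEVT α x + ε/2 ∧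
      gEVT α x - ε/2 < (n:ℝ) * (1 - F (a n * (x + σ) + b n)) := by
    filter_upwards [(hg _ hx'dom).eventually (eventually_gt_nhds hPg),
      (hg _ hx''dom).eventually (eventually_lt_nhds hgx''),
      (hg _ hxx'dom).eventually (eventually_lt_nhds (show gEVT α (x + -σ) < gEVT α x + ε/2 by linarith)),
      (hg _ hxx''dom).eventually (eventually_gt_nhds (show gEVT α x - ε/2 < gEVT α (x + σ) by linarith))]
      with n e1 e2 e3 e4
    exact ⟨e1, e2, e3, e4⟩
  have hEt := hN.eventually hE
  have hdN_ub : ∀ᶠ t in l, (N t : ℝ) * (1 - F t) < min P (1 + η) :=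
    hdN.eventually (eventually_lt_nhds (lt_min hP1 (by linarith)))
  filter_upwards [hEt, hFlt, hdN_lb, hdN_ub] with t hEn hFt hlb hub
  obtain ⟨e1, e2, e3, e4⟩ := hEn
  have htp : 0 < 1 - F t := by linarith
  have hnN0 : N t ≠ 0 := by
    intro h
    rw [h] at hlb
    norm_num at hlb
  have hnpos : (0:ℝ) < (N t : ℝ) := by
    exact_mod_cast Nat.pos_of_ne_zero hnN0
  have hAt : A t = a (N t) := if_pos hFt
  set n := N t
  set aa := a n with haa
  have hapn := hapos n
  -- location of t
  have hloc1 : aa * (-σ) + b n < t := by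
    by_contra hcon
    push_neg at hcon
    have hle := hF.1 hcon
    have h2 : (n:ℝ) * (1 - F t) < P := lt_of_lt_of_le hub (min_le_left _ _)
    have h3 : (n:ℝ) * (1 - F (aa * (-σ) + b n)) ≤ (n:ℝ) * (1 - F t) :=
      mul_le_mul_of_nonneg_left (by linarith) (Nat.cast_nonneg _)
    linarith
  have hloc2 : t < aa * σ + b n := by
    by_contra hcon
    push_neg at hcon
    have hle := hF.1 hcon
    have h3 : (n:ℝ) * (1 - F t) ≤ (n:ℝ) * (1 - F (aa * σ + b n)) :=
      mul_le_mul_of_nonneg_left (by linarith) (Nat.cast_nonneg _)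
    linarith
  -- bounds on the shifted point
  have hnum_ub : (n:ℝ) * (1 - F (t + x * aa)) < gEVT α x + ε/2 := by
    have hexp : aa * (x + -σ) + b n = (aa * (-σ) + b n) + x * aa := by ring
    have harg : aa * (x + -σ) + b n < t + x * aa := by rw [hexp]; linarith
    have hle := hF.1 harg.le
    have h3 : (n:ℝ) * (1 - F (t + x * aa)) ≤ (n:ℝ) * (1 - F (aa * (x + -σ) + b n)) :=
      mul_le_mul_of_nonneg_left (by linarith) (Nat.cast_nonneg _)
    linarith
  have hnum_lb : gEVT α x - ε/2 < (n:ℝ) * (1 - F (t + x * aa)) := by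
    have hexp : aa * (x + σ) + b n = (aa * σ + b n) + x * aa := by ring
    have harg : t + x * aa < aa * (x + σ) + b n := by rw [hexp]; linarith
    have hle := hF.1 harg.le
    have h3 : (n:ℝ) * (1 - F (aa * (x + σ) + b n)) ≤ (n:ℝ) * (1 - F (t + x * aa)) :=
      mul_le_mul_of_nonneg_left (by linarith) (Nat.cast_nonneg _)
    linarith
  have hnum_nn : 0 ≤ (n:ℝ) * (1 - F (t + x * aa)) := by
    have := F_le_one hF (t + x * aa)
    have : (0:ℝ) ≤ 1 - F (t + x * aa) := by linarith
    exact mul_nonneg (Nat.cast_nonneg _) this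
  -- rewrite the ratio
  have hr_eq : (1 - F (t + x * A t)) / (1 - F t)
      = ((n:ℝ) * (1 - F (t + x * aa))) / ((n:ℝ) * (1 - F t)) := by
    rw [hAt, mul_div_mul_left _ _ (ne_of_gt hnpos)]
  rw [hr_eq]
  set num := (n:ℝ) * (1 - F (t + x * aa)) with hnumdef
  set den := (n:ℝ) * (1 - F t) with hdendef
  have hden1 : 1 ≤ den := hlb
  have hdenub : den < 1 + η := lt_of_lt_of_le hub (min_le_right _ _)
  have hdenpos : 0 < den := by linarith
  rw [abs_le]
  have hub2 : num / den ≤ gEVT α x + ε :=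
    le_trans (div_le_self hnum_nn hden1) (by linarith)
  have hlb2 : gEVT α x - ε ≤ num / den := by
    rcases le_or_gt (gEVT α x - ε) 0 with hneg | hposx
    · exact le_trans hneg (div_nonneg hnum_nn hdenpos.le)
    · rw [le_div_iff₀ hdenpos]
      have h5 : (gEVT α x - ε) * den ≤ (gEVT α x - ε) * (1 + η) :=
        mul_le_mul_of_nonneg_left hdenub.le hposx.le
      have h6 : (gEVT α x - ε) * (1 + η) ≤ gEVT α x - ε/2 := by
        have h7 : η * (gEVT α x - ε) ≤ η * (gEVT α x + 1) :=
          mul_le_mul_of_nonneg_left (by linarith) hηpos.le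
        have h8 : η * (gEVT α x + 1) ≤ ε/2 := by
          have h9 := mul_le_mul_of_nonneg_right hηε
            (le_of_lt (show (0:ℝ) < gEVT α x + 1 by linarith))
          have heq : ε/(2*(gEVT α x + 1)) * (gEVT α x + 1) = ε/2 := by
            field_simp
          rw [heq] at h9
          exact h9
        have h10 : (gEVT α x - ε)*(1+η) = (gEVT α x - ε) + η*(gEVT α x - ε) := by ring
        linarith
      linarith
  exact ⟨by linarith, by linarith⟩

end CoreA

section CoreB

variable {F : ℝ → ℝ} {α : ℝ}

lemma F_lt_one_of_unbdd (hF : IsDistFun F) (hb : ¬ BddAbove {x | F x < 1}) (t : ℝ) :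
    F t < 1 := by
  by_contra h
  push_neg at h
  refine hb ⟨t, fun s hs => ?_⟩
  by_contra hst
  push_neg at hst
  have h2 : F t ≤ F s := hF.1 hst.le
  have h3 : F s < 1 := hs
  linarith

lemma exists_bseq (hF : IsDistFun F) (h1 : Tendsto F (upperEndFilter F) (𝓝 1)) :
    ∃ b : ℕ → ℝ, Tendsto b atTop (upperEndFilter F) ∧
      ∀ᶠ n : ℕ in atTop, F (b n) < 1 ∧ 1 - 1/(n:ℝ) ≤ F (b n) ∧
        ∀ s, s < b n → F s < 1 - 1/(n:ℝ) := by
  classical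
  haveI hne : (upperEndFilter F).NeBot := uef_neBot hF
  set c : ℕ → ℝ := fun n => 1 - 1/(n:ℝ) with hcdef
  have hc1 : Tendsto c atTop (𝓝 1) := by
    have := (tendsto_one_div_atTop_nhds_zero_nat (𝕜 := ℝ)).const_sub 1
    simp only [hcdef]
    simpa [one_div] using this
  obtain ⟨t₀, ht₀⟩ : ∃ t₀, F t₀ < 1/2 := by
    have := hF.2.2.1.eventually (eventually_lt_nhds (by norm_num : (0:ℝ) < 1/2))
    exact this.exists
  set b : ℕ → ℝ := fun n => sInf {t | c n ≤ F t} with hbdef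
  -- basic facts for n ≥ 2
  have hkey : ∀ n : ℕ, 2 ≤ n → (F (b n) < 1 ∧ c n ≤ F (b n) ∧
      ∀ s, s < b n → F s < c n) ∧ BddBelow {t | c n ≤ F t} ∧ {t | c n ≤ F t}.Nonempty := by
    intro n hn
    have hcn2 : (1:ℝ)/2 ≤ c n := by
      have h2 : (2:ℝ) ≤ (n:ℝ) := by exact_mod_cast hn
      have : 1/(n:ℝ) ≤ 1/2 := by
        apply div_le_div_of_nonneg_left _ _ h2 <;> norm_num
      simp only [hcdef]; linarith
    have hcn1 : c n < 1 := by
      have h2 : (0:ℝ) < (n:ℝ) := by positivity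
      simp only [hcdef]
      have : 0 < 1/(n:ℝ) := by positivity
      linarith
    have hSne : {t | c n ≤ F t}.Nonempty := by
      have := h1.eventually (eventually_gt_nhds hcn1)
      obtain ⟨t, ht⟩ := this.exists
      exact ⟨t, ht.le⟩
    have hSbdd : BddBelow {t | c n ≤ F t} := by
      refine ⟨t₀, fun s hs => ?_⟩
      by_contra hst
      push_neg at hst
      have := hF.1 hst.le
      have : F s < c n := by
        calc F s ≤ F t₀ := this
          _ < 1/2 := ht₀
          _ ≤ c n := hcn2
      exact absurd hs (not_le.2 this)
    have hFb : c n ≤ F (b n) := by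
      have hlim : Tendsto F (𝓝[>] (b n)) (𝓝 (F (b n))) :=
        (hF.2.1 (b n)).mono_left (nhdsWithin_mono _ Set.Ioi_subset_Ici_self)
      refine ge_of_tendsto hlim ?_
      filter_upwards [self_mem_nhdsWithin] with s (hs : b n < s)
      obtain ⟨u, hu, hus⟩ := (csInf_lt_iff hSbdd hSne).1 hs
      exact le_trans hu (hF.1 hus.le)
    have hsb : ∀ s, s < b n → F s < c n := by
      intro s hs
      by_contra hcon
      push_neg at hcon
      exact absurd (csInf_le hSbdd hcon) (not_le.2 hs)
    have hFb1 : F (b n) < 1 := by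
      by_cases hbdd : BddAbove {x | F x < 1}
      · refine F_lt_one_of_lt_csSup hF hbdd ?_
        -- b n < sSup {x | F x < 1}
        rw [uef_eq_of_bdd hbdd] at h1
        have hev : ∀ᶠ s in 𝓝[<] (sSup {x | F x < 1}), c n < F s ∧ s < sSup {x | F x < 1} := by
          filter_upwards [h1.eventually (eventually_gt_nhds hcn1), self_mem_nhdsWithin]
            with s hs1 hs2
          exact ⟨hs1, hs2⟩
        obtain ⟨s, hs1, hs2⟩ := hev.exists
        exact lt_of_le_of_lt (csInf_le hSbdd hs1.le) hs2
      · exact F_lt_one_of_unbdd hF hbdd _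
    exact ⟨⟨hFb1, hFb, hsb⟩, hSbdd, hSne⟩
  refine ⟨b, ?_, ?_⟩
  · -- tendsto
    by_cases hbdd : BddAbove {x | F x < 1}
    · rw [uef_eq_of_bdd hbdd]
      set m := sSup {x | F x < 1} with hm
      rw [uef_eq_of_bdd hbdd, ← hm] at h1
      have hblt : ∀ᶠ n : ℕ in atTop, b n < m := by
        filter_upwards [eventually_ge_atTop 2] with n hn
        obtain ⟨⟨h1', h2', h3'⟩, hSbdd, hSne⟩ := hkey n hn
        by_contra hcon
        push_neg at hcon
        have hFm : F m = 1 := by rw [hm]; exact F_csSup_eq_one hF hbdd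
        have : F m ≤ F (b n) := hF.1 hcon
        rw [hFm] at this
        linarith
      refine tendsto_nhdsWithin_of_tendsto_nhds_of_eventually_within _ ?_ ?_
      · refine tendsto_order.2 ⟨?_, ?_⟩
        · intro u hu
          -- eventually u < b n
          obtain ⟨s, hsu, hsm⟩ := exists_between hu
          have hFs : F s < 1 := F_lt_one_of_lt_csSup hF hbdd hsm
          have hev : ∀ᶠ n : ℕ in atTop, F s < c n :=
            hc1.eventually (eventually_gt_nhds hFs)
          filter_upwards [hev, eventually_ge_atTop 2] with n hn h2n
          obtain ⟨_, hSbdd, _⟩ := hkey n h2n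
          have : ∀ w ∈ {t | c n ≤ F t}, s ≤ w := by
            intro w hw
            by_contra hws
            push_neg at hws
            exact absurd (le_trans hw.out (hF.1 hws.le) : c n ≤ F s) (not_le.2 hn)
          have : s ≤ b n := le_csInf (hkey n h2n).2.2 this
          linarith
        · intro u hu
          filter_upwards [hblt] with n hn
          linarith
      · filter_upwards [hblt] with n hn
        exact hn
    · rw [uef_eq_of_unbdd hbdd]
      refine tendsto_atTop.2 fun M => ?_
      have hFM : F M < 1 := F_lt_one_of_unbdd hF hbdd M
      have hev : ∀ᶠ n : ℕ in atTop, F M < c n := hc1.eventually (eventually_gt_nhds hFM)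
      filter_upwards [hev, eventually_ge_atTop 2] with n hn h2n
      refine le_csInf (hkey n h2n).2.2 fun w hw => ?_
      by_contra hwM
      push_neg at hwM
      exact absurd (le_trans hw.out (hF.1 hwM.le) : c n ≤ F M) (not_le.2 hn)
  · filter_upwards [eventually_ge_atTop 2] with n hn
    exact (hkey n hn).1

end CoreB

section CoreB2

variable {F : ℝ → ℝ} {α : ℝ}

lemma coreB (hF : IsDistFun F) {A : ℝ → ℝ} (hApos : ∀ t, F t < 1 → 0 < A t)
    (hr : ∀ x : ℝ, 0 < 1 + α * x →
      Tendsto (fun t => (1 - F (t + x * A t)) / (1 - F t)) (upperEndFilter F)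
        (𝓝 (gEVT α x))) :
    MemDomAttr F (GEV α) := by
  classical
  have h1 : Tendsto F (upperEndFilter F) (𝓝 1) := tendsto_F_one_of_pot hF hr
  obtain ⟨b, hbl, hbev⟩ := exists_bseq hF h1
  set aq : ℕ → ℝ := fun n => if F (b n) < 1 then A (b n) else 1 with haq
  have haqpos : ∀ n, 0 < aq n := by
    intro n
    by_cases h : F (b n) < 1
    · simpa [haq, if_pos h] using hApos _ h
    · simp [haq, if_neg h]
  have haA : ∀ᶠ n : ℕ in atTop, aq n = A (b n) := by
    filter_upwards [hbev] with n hn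
    simp [haq, if_pos hn.1]
  -- `n · (1 - F (b n)) → 1`
  have hnr : Tendsto (fun n : ℕ => (n:ℝ) * (1 - F (b n))) atTop (𝓝 1) := by
    refine tendsto_of_abs_le_nat ?_
    intro ε hε
    obtain ⟨ρ₁, hρ₁pos, hρ₁⟩ := Metric.continuousAt_iff.1
      (g_contAt (show (0:ℝ) < 1 + α * 0 by norm_num)) (ε/4) (by linarith)
    obtain ⟨ρ₃, hρ₃pos, hρ₃⟩ := Metric.isOpen_iff.1 (dom_open α) 0 (by norm_num)
    set σ := min (ρ₁/2) (ρ₃/2) with hσdef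
    have hσpos : 0 < σ := lt_min (by linarith) (by linarith)
    have hσρ₁ : σ < ρ₁ := lt_of_le_of_lt (min_le_left _ _) (by linarith)
    have hσρ₃ : σ < ρ₃ := lt_of_le_of_lt (min_le_right _ _) (by linarith)
    have hx'dom : 0 < 1 + α * (-σ) := by
      have : (-σ) ∈ Metric.ball (0:ℝ) ρ₃ := by
        simp [Real.dist_eq, abs_of_pos hσpos, hσρ₃]
      exact hρ₃ this
    have hgub : gEVT α (-σ) < 1 + ε/4 := by
      have hd : dist (-σ) (0:ℝ) < ρ₁ := by
        simp [Real.dist_eq, abs_of_pos hσpos, hσρ₁]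
      have := hρ₁ hd
      rw [Real.dist_eq, g_zero, abs_lt] at this
      linarith [this.2]
    have hrx' : Tendsto (fun n : ℕ => (1 - F (b n + (-σ) * A (b n))) / (1 - F (b n)))
        atTop (𝓝 (gEVT α (-σ))) := (hr _ hx'dom).comp hbl
    have hevr : ∀ᶠ n : ℕ in atTop,
        (1 - F (b n + (-σ) * A (b n))) / (1 - F (b n)) < 1 + ε/2 :=
      hrx'.eventually (eventually_lt_nhds (by linarith))
    filter_upwards [hbev, hevr, eventually_ge_atTop 1] with n hb hn hn1
    obtain ⟨hFb1, hFb2, hFb3⟩ := hb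
    have hnpos : (0:ℝ) < (n:ℝ) := by
      have : (1:ℝ) ≤ (n:ℝ) := by exact_mod_cast hn1
      linarith
    have htb : 0 < 1 - F (b n) := by linarith
    have htb2 : 1 - F (b n) ≤ 1/(n:ℝ) := by linarith [hFb2]
    have hub : (n:ℝ) * (1 - F (b n)) ≤ 1 := by
      have := mul_le_mul_of_nonneg_left htb2 hnpos.le
      rw [mul_one_div, div_self (ne_of_gt hnpos)] at this
      exact this
    have hAp := hApos _ hFb1
    have hppt : b n + (-σ) * A (b n) < b n := by nlinarith
    have hFp : F (b n + (-σ) * A (b n)) < 1 - 1/(n:ℝ) := hFb3 _ hppt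
    have hnum : 1/(n:ℝ) < 1 - F (b n + (-σ) * A (b n)) := by linarith
    have hlt : 1 - F (b n + (-σ) * A (b n)) < (1 + ε/2) * (1 - F (b n)) := by
      rw [div_lt_iff₀ htb] at hn
      exact hn
    have hkey : 1 < (1 + ε/2) * ((n:ℝ) * (1 - F (b n))) := by
      have h2 : 1/(n:ℝ) < (1 + ε/2) * (1 - F (b n)) := lt_trans hnum hlt
      have h3 := mul_lt_mul_of_pos_left h2 hnpos
      rw [mul_one_div, div_self (ne_of_gt hnpos)] at h3
      calc (1:ℝ) < (n:ℝ) * ((1 + ε/2) * (1 - F (b n))) := h3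
        _ = (1 + ε/2) * ((n:ℝ) * (1 - F (b n))) := by ring
    rw [abs_le]
    constructor
    · nlinarith
    · linarith
  -- main sequential tail limit
  have hgb : ∀ x : ℝ, 0 < 1 + α * x →
      Tendsto (fun n : ℕ => (n:ℝ) * (1 - F (aq n * x + b n))) atTop (𝓝 (gEVT α x)) := by
    intro x hx
    have hratio : Tendsto (fun n : ℕ => (1 - F (b n + x * A (b n))) / (1 - F (b n)))
        atTop (𝓝 (gEVT α x)) := (hr x hx).comp hbl
    have hmul := hratio.mul hnr
    rw [mul_one] at hmul
    refine hmul.congr' ?_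
    filter_upwards [hbev, haA] with n hb hA
    obtain ⟨hFb1, _, _⟩ := hb
    have htb : (1 : ℝ) - F (b n) ≠ 0 := by
      have : F (b n) < 1 := hFb1
      intro h; rw [sub_eq_zero] at h; rw [← h] at this; exact lt_irrefl _ this
    have hpt : b n + x * A (b n) = aq n * x + b n := by rw [hA]; ring
    rw [← hpt]
    field_simp
  -- convergence of powers on the domain
  have hpow : ∀ x : ℝ, 0 < 1 + α * x →
      Tendsto (fun n : ℕ => F (aq n * x + b n) ^ n) atTop (𝓝 (GEV α x)) := by
    intro x hx
    rw [GEV_eq_exp hx]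
    have hnn : ∀ᶠ n : ℕ in atTop, 0 ≤ 1 - F (aq n * x + b n) :=
      Eventually.of_forall fun n => by linarith [F_le_one hF (aq n * x + b n)]
    have := pow_tendsto_exp hnn (hgb x hx)
    refine this.congr fun n => ?_
    norm_num
  refine ⟨aq, b, haqpos, fun x _ => ?_⟩
  by_cases hx : 0 < 1 + α * x
  · exact hpow x hx
  · push_neg at hx
    have hα0 : α ≠ 0 := by
      intro h; rw [h] at hx; norm_num at hx
    rcases lt_or_gt_of_ne hα0 with hneg | hpos
    · -- α < 0 : limit 1
      have hGEV : GEV α x = 1 := by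
        rw [GEV, if_neg (not_lt.2 hx), if_neg (not_lt.2 hneg.le)]
      rw [hGEV]
      refine tendsto_of_abs_le_nat ?_
      intro ε hε
      set v := min (ε/2) (1/2) with hv
      have hvpos : 0 < v := lt_min (by linarith) (by norm_num)
      have hvε : v ≤ ε/2 := min_le_left _ _
      obtain ⟨y, hydom, hyval⟩ := g_solve (α := α) v hvpos
      have hyx : y ≤ x := by
        by_contra hcon
        push_neg at hcon
        have h2 : α * y < α * x := by nlinarith
        have h3 : α * x ≤ -1 := by linarith
        have h4 : -1 < α * y := by linarith
        linarith
      have hexpv : GEV α y = Real.exp (-v) := by rw [GEV_eq_exp hydom, hyval]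
      have hlim := hpow y hydom
      rw [hexpv] at hlim
      have hev : ∀ᶠ n : ℕ in atTop, Real.exp (-v) - ε/2 < F (aq n * y + b n) ^ n :=
        hlim.eventually (eventually_gt_nhds (by linarith [Real.exp_pos (-v)]))
      filter_upwards [hev] with n hn
      have hmono : F (aq n * y + b n) ^ n ≤ F (aq n * x + b n) ^ n := by
        apply pow_le_pow_left₀ (F_nonneg hF _)
        apply hF.1
        have := haqpos n
        nlinarith
      have hle1 : F (aq n * x + b n) ^ n ≤ 1 :=
        pow_le_one₀ (F_nonneg hF _) (F_le_one hF _)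
      have hev2 : 1 - v ≤ Real.exp (-v) := by
        have := Real.add_one_le_exp (-v); linarith
      rw [abs_le]
      constructor
      · linarith
      · linarith
    · -- α > 0 : limit 0
      have hGEV : GEV α x = 0 := by
        rw [GEV, if_neg (not_lt.2 hx), if_pos hpos]
      rw [hGEV]
      refine tendsto_of_abs_le_nat ?_
      intro ε hε
      set M := max 1 (1 - Real.log ε) with hM
      have hMpos : 0 < M := lt_of_lt_of_le one_pos (le_max_left _ _)
      obtain ⟨y, hydom, hyval⟩ := g_solve (α := α) M hMpos
      have hxy : x ≤ y := by
        by_contra hcon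
        push_neg at hcon
        have h2 : α * y < α * x := by nlinarith
        have h3 : α * x ≤ -1 := by linarith
        have h4 : -1 < α * y := by linarith
        linarith
      have hexpM : GEV α y = Real.exp (-M) := by rw [GEV_eq_exp hydom, hyval]
      have hlim := hpow y hydom
      rw [hexpM] at hlim
      have hexplt : Real.exp (-M) < ε := by
        have h2 : -M ≤ Real.log ε - 1 := by
          have := le_max_right 1 (1 - Real.log ε); linarith
        calc Real.exp (-M) ≤ Real.exp (Real.log ε - 1) := Real.exp_le_exp.2 h2
          _ = ε * Real.exp (-1) := by
              rw [Real.exp_sub, Real.exp_log hε, Real.exp_neg]; ring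
          _ < ε * 1 := by
              apply mul_lt_mul_of_pos_left _ hε
              rw [show (1:ℝ) = Real.exp 0 by simp]
              exact Real.exp_lt_exp.2 (by norm_num)
          _ = ε := mul_one ε
      have hev : ∀ᶠ n : ℕ in atTop, F (aq n * y + b n) ^ n < ε :=
        hlim.eventually (eventually_lt_nhds hexplt)
      filter_upwards [hev] with n hn
      have hmono : F (aq n * x + b n) ^ n ≤ F (aq n * y + b n) ^ n := by
        apply pow_le_pow_left₀ (F_nonneg hF _)
        apply hF.1
        have := haqpos n
        nlinarith
      have hge0 : 0 ≤ F (aq n * x + b n) ^ n := pow_nonneg (F_nonneg hF _) n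
      rw [abs_le]
      constructor
      · linarith
      · linarith

end CoreB2


/-- Forward direction packaged. -/
lemma mp_dir {F : ℝ → ℝ} {α : ℝ} (hF : IsDistFun F) (hD : MemDomAttr F (GEV α)) :
    ∃ a : ℝ → ℝ, (∀ t, F t < 1 → 0 < a t) ∧
      ∀ x : ℝ, 0 < 1 + α * x →
        Tendsto (fun t => (1 - F (t + x * a t)) / (1 - F t)) (upperEndFilter F)
          (𝓝 (gEVT α x)) := by
  obtain ⟨a, b, hapos, hconv⟩ := hD
  have h1 : Tendsto F (upperEndFilter F) (𝓝 1) :=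
    tendsto_F_one_of_dom hF ⟨a, b, hapos, hconv⟩
  have hg : ∀ x : ℝ, 0 < 1 + α * x →
      Tendsto (fun n : ℕ => (n:ℝ) * (1 - F (a n * x + b n))) atTop (𝓝 (gEVT α x)) := by
    intro x hx
    have hc := hconv x (GEV_contAt hx)
    rw [GEV_eq_exp hx] at hc
    have hL0 : 0 < Real.exp (-gEVT α x) := Real.exp_pos _
    have hL1 : Real.exp (-gEVT α x) < 1 := by
      rw [show (1:ℝ) = Real.exp 0 by simp]
      exact Real.exp_lt_exp.2 (by linarith [g_pos hx])
    have h2 := (of_pow_tendsto hL0 hL1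
      (Eventually.of_forall fun n => F_nonneg hF _) hc).2
    rwa [Real.log_exp, neg_neg] at h2
  exact coreA hF h1 hapos hg

end EVTAux

open EVTAux in
/-- **Unified domain-of-attraction / Pickands–Balkema–de Haan theorem.** -/
theorem unified_domain_of_attraction_POT (F : ℝ → ℝ) (hF : IsDistFun F) (α : ℝ) :
    (MemDomAttr F (GEV α) ↔
      ∃ a : ℝ → ℝ, (∀ t, F t < 1 → 0 < a t) ∧
        ∀ x : ℝ, 0 < 1 + α * x →
          Tendsto (fun t => (1 - F (t + x * a t)) / (1 - F t))
            (upperEndFilter F) (𝓝 (gEVT α x))) ∧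
    (MemDomAttr F (GEV α) ↔
      ∃ a : ℝ → ℝ, (∀ t, F t < 1 → 0 < a t) ∧
        ∀ x : ℝ, 0 < 1 + α * x →
          Tendsto (fun t => 1 - (1 - F (t + x * a t)) / (1 - F t))
            (upperEndFilter F) (𝓝 (1 - gEVT α x))) := by
  constructor
  · constructor
    · exact fun hD => mp_dir hF hD
    · rintro ⟨A, hApos, hr⟩
      exact coreB hF hApos hr
  · constructor
    · intro hD
      obtain ⟨A, h1, h2⟩ := mp_dir hF hD
      exact ⟨A, h1, fun x hx => (h2 x hx).const_sub 1⟩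
    · rintro ⟨A, hApos, hr⟩
      refine coreB hF hApos fun x hx => ?_
      have h2 := (hr x hx).const_sub 1
      simpa using h2
end

section
/- Threshold stability characterises the generalised Pareto distributions: Let W : [0,∞) → (0,1] be continuous and strictly decreasing with W(0) = 1 and W(x) → 0 as x → ∞. Suppose that for every u ≥ 0 there exists σ(u) > 0 such that W(u + σ(u)·x)/W(u) = W(x) for all x ≥ 0. Then there exist σ > 0 and α ≥ 0 such that either W(x) = e^{−x/σ} for all x ≥ 0 (case α = 0), or W(x) = (1 + αx/σ)^{−1/α} for all x ≥ 0. -/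
open Filter Topology

lemma cauchy_half_line (L : ℝ → ℝ) (hc : ContinuousOn L (Set.Ici 0))
    (hadd : ∀ s ≥ (0:ℝ), ∀ t ≥ (0:ℝ), L (s + t) = L s + L t) :
    ∀ s ≥ (0:ℝ), L s = s * L 1 := by
  have hL0 : L 0 = 0 := by
    have := hadd 0 le_rfl 0 le_rfl; simpa using this.symm
  have hnat : ∀ n : ℕ, ∀ x ≥ (0:ℝ), L (n * x) = n * L x := by
    intro n
    induction n with
    | zero => intro x hx; simpa using hL0
    | succ n ih =>
      intro x hx
      have h1 : ((n:ℝ) + 1) * x = (n:ℝ) * x + x := by ring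
      have h2 : L ((n:ℝ) * x + x) = L ((n:ℝ)*x) + L x :=
        hadd _ (by positivity) _ hx
      push_cast
      rw [h1, h2, ih x hx]; ring
  have hrat : ∀ q : ℚ, 0 ≤ q → L (q : ℝ) = (q : ℝ) * L 1 := by
    intro q hq
    have hden : (0:ℝ) < (q.den : ℝ) := by positivity
    have hnum : ((q.num.toNat : ℕ) : ℝ) = (q.num : ℝ) := by
      have : (0:ℤ) ≤ q.num := Rat.num_nonneg.mpr hq
      exact_mod_cast Int.toNat_of_nonneg this
    have h1 : (q.den : ℝ) * (q : ℝ) = (q.num : ℝ) := by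
      rw [mul_comm]
      exact_mod_cast Rat.mul_den_eq_num q
    have h2 : L ((q.den : ℝ) * (q : ℝ)) = (q.den : ℝ) * L q :=
      hnat q.den (q:ℝ) (by exact_mod_cast hq)
    have h3 : L ((q.num : ℝ)) = (q.num : ℝ) * L 1 := by
      rw [← hnum]
      simpa using hnat q.num.toNat 1 zero_le_one
    have h4 : (q.den : ℝ) * L q = (q.num : ℝ) * L 1 := by
      rw [← h2, h1, h3]
    have : L q = ((q.num : ℝ) / (q.den : ℝ)) * L 1 := by
      field_simp at h4 ⊢; linarith [h4]
    rw [this, Rat.cast_def]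
  set S : Set ℝ := {x | 0 ≤ x ∧ ∃ q : ℚ, (q : ℝ) = x} with hS
  have hSsub : S ⊆ Set.Ici 0 := fun x hx => hx.1
  have hclos : Set.Ici (0:ℝ) ⊆ closure S := by
    intro x hx
    rw [Metric.mem_closure_iff]
    intro ε hε
    obtain ⟨q, hq1, hq2⟩ := exists_rat_btwn (lt_add_of_pos_right x hε)
    refine ⟨(q:ℝ), ⟨le_of_lt (lt_of_le_of_lt hx hq1), q, rfl⟩, ?_⟩
    rw [Real.dist_eq, abs_sub_lt_iff]
    constructor <;> linarith
  have heq : Set.EqOn L (fun x => x * L 1) S := by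
    intro x hx
    obtain ⟨hx0, q, hq⟩ := hx
    subst hq
    exact hrat q (by exact_mod_cast hx0)
  have hEq2 : Set.EqOn L (fun x => x * L 1) (Set.Ici 0) :=
    heq.of_subset_closure hc ((continuous_id.mul continuous_const).continuousOn)
      hSsub hclos
  intro s hs
  exact hEq2 hs

/-- **Threshold stability characterises the generalised Pareto laws.**
Let `W : [0,∞) → (0,1]` be a continuous, strictly decreasing survival function
with `W(0) = 1` and `W(x) → 0` as `x → ∞`.  If for every threshold `u ≥ 0`
there is a scaling `σ(u) > 0` with `W(u + σ(u) x)/W(u) = W(x)` for all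
`x ≥ 0`, then `W` is a generalised Pareto survival function: there are `σ > 0`
and `α ≥ 0` with either `W(x) = e^{-x/σ}` (case `α = 0`) or
`W(x) = (1 + αx/σ)^{-1/α}` (case `α > 0`) for all `x ≥ 0`. -/
theorem threshold_stability_characterises_GPD (W : ℝ → ℝ)
    (hcont : ContinuousOn W (Set.Ici 0))
    (hanti : StrictAntiOn W (Set.Ici 0))
    (hrange : ∀ x ≥ (0:ℝ), 0 < W x ∧ W x ≤ 1)
    (hW0 : W 0 = 1)
    (hlim : Tendsto W atTop (𝓝 0))
    (σfun : ℝ → ℝ) (hσpos : ∀ u ≥ (0:ℝ), 0 < σfun u)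
    (hstable : ∀ u ≥ (0:ℝ), ∀ x ≥ (0:ℝ), W (u + σfun u * x) / W u = W x) :
    ∃ σ : ℝ, 0 < σ ∧ ∃ α : ℝ, 0 ≤ α ∧
      ((α = 0 ∧ ∀ x ≥ (0:ℝ), W x = Real.exp (-x / σ)) ∨
        (0 < α ∧ ∀ x ≥ (0:ℝ), W x = (1 + α * x / σ) ^ (-1 / α))) := by
  have hinj : Set.InjOn W (Set.Ici 0) := hanti.injOn
  have hWpos : ∀ x ≥ (0:ℝ), 0 < W x := fun x hx => (hrange x hx).1
  have hmul : ∀ u ≥ (0:ℝ), ∀ x ≥ (0:ℝ), W (u + σfun u * x) = W u * W x := by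
    intro u hu x hx
    have h := hstable u hu x hx
    rw [div_eq_iff (hWpos u hu).ne'] at h
    rw [h]; ring
  have harg : ∀ u ≥ (0:ℝ), ∀ x ≥ (0:ℝ), (0:ℝ) ≤ u + σfun u * x := by
    intro u hu x hx
    have h := (hσpos u hu).le
    positivity
  have hcomm : ∀ u ≥ (0:ℝ), ∀ x ≥ (0:ℝ), u + σfun u * x = x + σfun x * u := by
    intro u hu x hx
    apply hinj (harg u hu x hx) (harg x hx u hu)
    rw [hmul u hu x hx, hmul x hx u hu]; ring
  set α := σfun 1 - 1 with hαdef
  have hσ : ∀ u ≥ (0:ℝ), σfun u = 1 + α * u := by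
    intro u hu
    have h := hcomm u hu 1 zero_le_one
    have h1 : σfun u * 1 = σfun u := mul_one _
    rw [hαdef]; nlinarith [h]
  have hα0 : 0 ≤ α := by
    by_contra h
    push_neg at h
    have hu : (0:ℝ) ≤ -2/α := by
      apply le_of_lt
      exact div_pos_of_neg_of_neg (by norm_num) h
    have := hσ _ hu
    have hαne' : α ≠ 0 := ne_of_lt h
    have h2 : σfun (-2/α) = -1 := by
      rw [this]; field_simp; ring
    have := hσpos _ hu
    rw [h2] at this; linarith
  have hFE : ∀ u ≥ (0:ℝ), ∀ x ≥ (0:ℝ), W (u + (1 + α*u) * x) = W u * W x := by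
    intro u hu x hx
    rw [← hσ u hu]; exact hmul u hu x hx
  rcases eq_or_lt_of_le hα0 with hz | hpos
  · -- exponential case
    set L := fun x => Real.log (W x) with hLdef
    have hLc : ContinuousOn L (Set.Ici 0) :=
      hcont.log (fun x hx => (hWpos x hx).ne')
    have hLadd : ∀ s ≥ (0:ℝ), ∀ t ≥ (0:ℝ), L (s + t) = L s + L t := by
      intro s hs t ht
      have h := hFE s hs t ht
      rw [← hz] at h
      simp only [zero_mul, add_zero, one_mul] at h
      simp only [hLdef]
      rw [h, Real.log_mul (hWpos s hs).ne' (hWpos t ht).ne']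
    have hlin := cauchy_half_line L hLc hLadd
    have hW1 : W 1 < 1 := by
      have := hanti (Set.mem_Ici.mpr le_rfl) (Set.mem_Ici.mpr zero_le_one) zero_lt_one
      rwa [hW0] at this
    have hL1 : L 1 < 0 := Real.log_neg (hWpos 1 zero_le_one) hW1
    refine ⟨-1 / L 1, div_pos_of_neg_of_neg (by norm_num) hL1, 0, le_rfl, Or.inl ⟨rfl, ?_⟩⟩
    intro x hx
    have h1 : W x = Real.exp (L x) := (Real.exp_log (hWpos x hx)).symm
    rw [h1, hlin x hx]
    congr 1
    field_simp
  · -- Pareto case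
    have hαne : α ≠ 0 := ne_of_gt hpos
    set φ := fun s => W ((Real.exp s - 1) / α) with hφdef
    have hmap : ∀ s ≥ (0:ℝ), (0:ℝ) ≤ (Real.exp s - 1) / α := by
      intro s hs
      have : (1:ℝ) ≤ Real.exp s := Real.one_le_exp hs
      have h2 : (0:ℝ) ≤ Real.exp s - 1 := by linarith
      positivity
    set L := fun s => Real.log (φ s) with hLdef
    have hφc : ContinuousOn φ (Set.Ici 0) := by
      apply hcont.comp
      · exact ((Real.continuous_exp.sub continuous_const).div_const α).continuousOn
      · intro s hs; exact hmap s hs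
    have hLc : ContinuousOn L (Set.Ici 0) :=
      hφc.log (fun s hs => (hWpos _ (hmap s hs)).ne')
    have hφmul : ∀ s ≥ (0:ℝ), ∀ t ≥ (0:ℝ), φ (s + t) = φ s * φ t := by
      intro s hs t ht
      have key : (Real.exp (s+t) - 1) / α
          = (Real.exp s - 1)/α + (1 + α * ((Real.exp s - 1)/α)) * ((Real.exp t - 1)/α) := by
        rw [Real.exp_add]
        field_simp
        ring
      simp only [hφdef]
      rw [key]
      exact hFE _ (hmap s hs) _ (hmap t ht)
    have hLadd : ∀ s ≥ (0:ℝ), ∀ t ≥ (0:ℝ), L (s + t) = L s + L t := by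
      intro s hs t ht
      simp only [hLdef]
      rw [hφmul s hs t ht,
        Real.log_mul (hWpos _ (hmap s hs)).ne' (hWpos _ (hmap t ht)).ne']
    have hlin := cauchy_half_line L hLc hLadd
    have hargpos : (0:ℝ) < (Real.exp 1 - 1)/α := by
      have : (1:ℝ) < Real.exp 1 := by
        calc (1:ℝ) = Real.exp 0 := Real.exp_zero.symm
        _ < Real.exp 1 := Real.exp_lt_exp.mpr zero_lt_one
      have h2 : (0:ℝ) < Real.exp 1 - 1 := by linarith
      positivity
    have hL1 : L 1 < 0 := by
      apply Real.log_neg (hWpos _ (hmap 1 zero_le_one))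
      have := hanti (Set.mem_Ici.mpr le_rfl) (Set.mem_Ici.mpr hargpos.le) hargpos
      rwa [hW0] at this
    set c := -(L 1) with hcdef
    have hc : 0 < c := by simp [hcdef]; linarith
    refine ⟨1 / (c * α), by positivity, 1/c, by positivity, Or.inr ⟨by positivity, ?_⟩⟩
    intro x hx
    have h1x : (0:ℝ) < 1 + α * x := by nlinarith
    have hs0 : (0:ℝ) ≤ Real.log (1 + α * x) := Real.log_nonneg (by nlinarith)
    have hexp : Real.exp (Real.log (1 + α * x)) = 1 + α * x := Real.exp_log h1x
    have hφx : φ (Real.log (1 + α * x)) = W x := by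
      simp only [hφdef, hexp]
      congr 1
      field_simp
      ring
    have hWx : W x = Real.exp (L (Real.log (1 + α * x))) := by
      rw [← hφx]
      exact (Real.exp_log (hWpos _ (hmap _ hs0))).symm
    rw [hWx, hlin _ hs0]
    have hbase : 1 + (1/c) * x / (1 / (c * α)) = 1 + α * x := by
      field_simp
    rw [hbase]
    have hne : -1 / (1/c) = -c := by field_simp
    rw [hne]
    rw [Real.rpow_def_of_pos h1x]
    congr 1
    simp only [hcdef]
    ring
end

section
/- Von Mises functions have tails decreasing faster than any power: Let c > 0, d ∈ ℝ, let a : [d,∞) → (0,∞) be differentiable with a′(t) → 0 as t → ∞, and set F̄(x) := c·exp(−∫_d^x dt/a(t)) for x ≥ d. Then for every n ∈ ℕ, xⁿ·F̄(x) → 0 as x → ∞. -/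
open Filter Topology

/-- **Von Mises functions have tails decreasing faster than any power.**
Let `F̄(x) = c · exp(-∫_d^x dt/a(t))` be the tail of a von Mises function,
where `a > 0` on `[d, ∞)` is differentiable with `a'(t) → 0` as `t → ∞`.
Then `xⁿ F̄(x) → 0` as `x → ∞` for every `n ∈ ℕ`. -/
theorem vonMises_tail_rapidly_decreasing (c d : ℝ) (hc : 0 < c)
    (a a' : ℝ → ℝ) (hpos : ∀ t ≥ d, 0 < a t)
    (hderiv : ∀ t ≥ d, HasDerivAt a (a' t) t)
    (hlim : Tendsto a' atTop (𝓝 0)) :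
    ∀ n : ℕ,
      Tendsto (fun x => x ^ n * (c * Real.exp (-∫ t in d..x, 1 / a t)))
        atTop (𝓝 0) := by
  intro n
  -- choose ε = 1/(n+1)
  set ε : ℝ := 1 / (n + 1) with hεdef
  have hε : 0 < ε := by positivity
  -- find t₁ beyond which |a'| ≤ ε
  have h1 : ∀ᶠ t in atTop, |a' t| < ε := by
    have := Metric.tendsto_nhds.mp hlim ε hε
    filter_upwards [this] with t ht
    simpa [Real.dist_eq] using ht
  obtain ⟨t₁, ht₁⟩ := eventually_atTop.mp h1
  set t₀ : ℝ := max d t₁ with ht₀def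
  have ht₀d : d ≤ t₀ := le_max_left _ _
  have ht₀1 : t₁ ≤ t₀ := le_max_right _ _
  set A : ℝ := a t₀ with hAdef
  have hA : 0 < A := hpos t₀ ht₀d
  -- continuity of a on [d, ∞)
  have hcont : ∀ t ≥ d, ContinuousAt a t := fun t ht => (hderiv t ht).continuousAt
  have hconta : ∀ x y : ℝ, d ≤ x → d ≤ y → ContinuousOn (fun t => 1 / a t) (Set.uIcc x y) := by
    intro x y hx hy
    apply ContinuousOn.div continuousOn_const
    · intro t ht
      have : d ≤ t := le_trans (le_min hx hy) ht.1
      exact (hcont t this).continuousWithinAt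
    · intro t ht
      have : d ≤ t := le_trans (le_min hx hy) ht.1
      exact (hpos t this).ne'
  -- key growth bound : a t ≤ A + ε (t - t₀) for t ≥ t₀
  have key : ∀ t ≥ t₀, a t ≤ A + ε * (t - t₀) := by
    intro t ht
    have hb : ‖a t - a t₀‖ ≤ ε * ‖t - t₀‖ := by
      apply Convex.norm_image_sub_le_of_norm_hasDerivWithin_le
        (f' := a') (s := Set.Ici t₀)
      · intro s hs
        exact (hderiv s (le_trans ht₀d hs)).hasDerivWithinAt
      · intro s hs
        exact le_of_lt (ht₁ s (le_trans ht₀1 hs))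
      · exact convex_Ici t₀
      · exact Set.self_mem_Ici
      · exact ht
    rw [Real.norm_eq_abs, Real.norm_eq_abs, abs_of_nonneg (show (0:ℝ) ≤ t - t₀ by linarith)] at hb
    have h2 := le_trans (le_abs_self (a t - a t₀)) hb
    linarith
  set B : ℝ := A - ε * t₀ with hBdef
  set L : ℝ → ℝ := fun t => ε * t + B with hLdef
  have hL : ∀ t ≥ t₀, 0 < L t := by
    intro t ht
    have : L t = A + ε * (t - t₀) := by simp [hLdef, hBdef]; ring
    rw [this]
    nlinarith
  have keyL : ∀ t ≥ t₀, a t ≤ L t := by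
    intro t ht
    have : L t = A + ε * (t - t₀) := by simp [hLdef, hBdef]; ring
    rw [this]; exact key t ht
  set G : ℝ → ℝ := fun t => (n + 1) * Real.log (L t) with hGdef
  have hGderiv : ∀ t ≥ t₀, HasDerivAt G (1 / L t) t := by
    intro t ht
    have hline : HasDerivAt L ε t := by
      simpa [hLdef] using ((hasDerivAt_id t).const_mul ε).add_const B
    have hd := (hline.log (hL t ht).ne').const_mul ((n : ℝ) + 1)
    have hne : ((n : ℝ) + 1) * ε = 1 := by
      rw [hεdef]; field_simp
    have : ((n : ℝ) + 1) * (ε / L t) = 1 / L t := by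
      rw [← mul_div_assoc, hne]
    rwa [this] at hd
  set C₀ : ℝ := ∫ t in d..t₀, 1 / a t with hC₀def
  -- lower bound on the integral for x ≥ t₀
  have lower : ∀ x ≥ t₀, C₀ + (G x - G t₀) ≤ ∫ t in d..x, 1 / a t := by
    intro x hx
    have hi1 : IntervalIntegrable (fun t => 1 / a t) MeasureTheory.volume d t₀ :=
      (hconta d t₀ le_rfl ht₀d).intervalIntegrable
    have hi2 : IntervalIntegrable (fun t => 1 / a t) MeasureTheory.volume t₀ x :=
      (hconta t₀ x ht₀d (le_trans ht₀d hx)).intervalIntegrable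
    have hsplit : C₀ + ∫ t in t₀..x, 1 / a t = ∫ t in d..x, 1 / a t :=
      intervalIntegral.integral_add_adjacent_intervals hi1 hi2
    have hiL : IntervalIntegrable (fun t => 1 / L t) MeasureTheory.volume t₀ x := by
      apply ContinuousOn.intervalIntegrable
      apply ContinuousOn.div continuousOn_const
      · exact (Continuous.continuousOn (by continuity))
      · intro t htt
        rw [Set.uIcc_of_le hx] at htt
        exact (hL t htt.1).ne'
    have hmono : ∫ t in t₀..x, 1 / L t ≤ ∫ t in t₀..x, 1 / a t := by
      apply intervalIntegral.integral_mono_on hx hiL hi2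
      intro t htt
      exact one_div_le_one_div_of_le (hpos t (le_trans ht₀d htt.1)) (keyL t htt.1)
    have hftc : ∫ t in t₀..x, 1 / L t = G x - G t₀ := by
      apply intervalIntegral.integral_eq_sub_of_hasDerivAt
      · intro t htt
        rw [Set.uIcc_of_le hx] at htt
        exact hGderiv t htt.1
      · exact hiL
    linarith [hmono, hftc.symm.le]
  -- the dominating function
  set K : ℝ := c * Real.exp (G t₀ - C₀) with hKdef
  have hbound : ∀ᶠ x in atTop, x ^ n * (c * Real.exp (-∫ t in d..x, 1 / a t))
      ≤ K * ((x / L x) ^ n * (1 / L x)) := by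
    filter_upwards [eventually_ge_atTop t₀, eventually_ge_atTop (0:ℝ)] with x hx hx0
    have hLx := hL x hx
    have hexpG : Real.exp (G x) = (L x) ^ (n + 1) := by
      have : G x = ((n + 1 : ℕ) : ℝ) * Real.log (L x) := by push_cast [hGdef]; ring
      rw [this, Real.exp_nat_mul, Real.exp_log hLx]
    have h1 : Real.exp (-∫ t in d..x, 1 / a t) ≤ Real.exp (G t₀ - C₀ - G x) := by
      apply Real.exp_le_exp.mpr
      have := lower x hx
      linarith
    have h2 : Real.exp (G t₀ - C₀ - G x) = Real.exp (G t₀ - C₀) / (L x) ^ (n + 1) := by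
      rw [Real.exp_sub, hexpG]
    calc x ^ n * (c * Real.exp (-∫ t in d..x, 1 / a t))
        ≤ x ^ n * (c * (Real.exp (G t₀ - C₀) / (L x) ^ (n + 1))) := by
          apply mul_le_mul_of_nonneg_left _ (pow_nonneg hx0 n)
          rw [← h2]
          exact mul_le_mul_of_nonneg_left h1 hc.le
      _ = x ^ n * (K / (L x) ^ (n + 1)) := by rw [hKdef, mul_div_assoc]
      _ = K * ((x / L x) ^ n * (1 / L x)) := by
          rw [div_pow, pow_succ]
          have hne := hLx.ne'
          field_simp
  have hnonneg : ∀ᶠ x in atTop, 0 ≤ x ^ n * (c * Real.exp (-∫ t in d..x, 1 / a t)) := by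
    filter_upwards [eventually_ge_atTop (0:ℝ)] with x hx0
    positivity
  -- the dominating function tends to 0
  have hLtop : Tendsto L atTop atTop := by
    apply tendsto_atTop_add_const_right
    exact tendsto_id.const_mul_atTop hε
  have hratio : Tendsto (fun x => x / L x) atTop (𝓝 (1 / ε)) := by
    have h : (fun x : ℝ => 1 / (ε + B / x)) =ᶠ[atTop] fun x => x / L x := by
      filter_upwards [eventually_gt_atTop (0:ℝ)] with x hx
      show 1 / (ε + B / x) = x / (ε * x + B)
      rw [add_div' _ _ _ hx.ne', one_div_div]
    apply Tendsto.congr' h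
    have hden : Tendsto (fun x : ℝ => ε + B / x) atTop (𝓝 ε) := by
      have : Tendsto (fun x : ℝ => B / x) atTop (𝓝 0) :=
        Tendsto.div_atTop tendsto_const_nhds tendsto_id
      simpa using tendsto_const_nhds.add this
    simpa [one_div] using hden.inv₀ hε.ne'
  have hinv : Tendsto (fun x => 1 / L x) atTop (𝓝 0) :=
    Tendsto.div_atTop tendsto_const_nhds hLtop
  have hdom : Tendsto (fun x => K * ((x / L x) ^ n * (1 / L x))) atTop (𝓝 0) := by
    have := ((hratio.pow n).mul hinv).const_mul K
    simpa using this
  exact squeeze_zero' hnonneg hbound hdom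
end

section
/- Convex generators yield bivariate Archimedean copulas: Let ψ : [0,∞) → ℝ be continuous, convex and strictly decreasing with ψ(0) = 1 and ψ(t) → 0 as t → ∞, so that ψ is a bijection from [0,∞) onto (0,1] with inverse ψ^{-1}. Define C(u,v) := ψ(ψ^{-1}(u) + ψ^{-1}(v)) for u, v ∈ (0,1] and C(u,v) := 0 if u = 0 or v = 0. Then C has uniform margins, C(u,1) = u and C(1,v) = v for all u, v ∈ [0,1], and C is 2-increasing: for all 0 ≤ u₁ ≤ u₂ ≤ 1 and 0 ≤ v₁ ≤ v₂ ≤ 1, C(u₂,v₂) − C(u₁,v₂) − C(u₂,v₁) + C(u₁,v₁) ≥ 0; hence C is a copula. -/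
open Filter Topology

private lemma convex_four (ψ : ℝ → ℝ) (hconv : ConvexOn ℝ (Set.Ici 0) ψ)
    (p q r s : ℝ) (hp : 0 ≤ p) (hpq : p ≤ q) (hqs : q ≤ s)
    (hsum : p + s = q + r) : ψ q + ψ r ≤ ψ p + ψ s := by
  rcases eq_or_lt_of_le (hpq.trans hqs) with h | h
  · have hq : q = p := le_antisymm (h ▸ hqs) hpq
    have hr : r = p := by linarith
    rw [hq, hr, h]
  · set l : ℝ := (s - q) / (s - p) with hl
    have hsp : 0 < s - p := by linarith
    have hl0 : 0 ≤ l := div_nonneg (by linarith) hsp.le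
    have hl1 : l ≤ 1 := by
      rw [div_le_one hsp]; linarith
    have hps : (p : ℝ) ∈ Set.Ici (0:ℝ) := hp
    have hss : (s : ℝ) ∈ Set.Ici (0:ℝ) := by exact le_trans hp h.le
    have hls : l * (s - p) = s - q := div_mul_cancel₀ _ hsp.ne'
    have hq' : l * p + (1 - l) * s = q := by nlinarith [hls]
    have hr' : (1 - l) * p + l * s = r := by nlinarith [hls]
    have h1 : ψ (l • p + (1 - l) • s) ≤ l • ψ p + (1 - l) • ψ s :=
      hconv.2 hps hss hl0 (by linarith) (by ring)
    have h2 : ψ ((1 - l) • p + l • s) ≤ (1 - l) • ψ p + l • ψ s :=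
      hconv.2 hps hss (by linarith) hl0 (by ring)
    simp only [smul_eq_mul] at h1 h2
    rw [hq'] at h1
    rw [hr'] at h2
    linarith

/-- **Convex generators yield bivariate Archimedean copulas.**
Let `ψ : [0,∞) → (0,1]` be continuous, convex and strictly decreasing with
`ψ(0) = 1` and `ψ(t) → 0` as `t → ∞`, so that `ψ` is a bijection from `[0,∞)`
onto `(0,1]` with inverse `ψinv`.  Define the Archimedean copula
`C(u,v) = ψ(ψinv(u) + ψinv(v))` for `u, v ∈ (0,1]` and `C(u,v) = 0` if `u = 0`
or `v = 0`.  Then `C` has uniform margins, `C(u,1) = u` and `C(1,v) = v`, and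
`C` is 2-increasing; hence `C` is a copula. -/
theorem convex_generator_archimedean_copula (ψ ψinv : ℝ → ℝ)
    (hcont : ContinuousOn ψ (Set.Ici 0))
    (hconv : ConvexOn ℝ (Set.Ici 0) ψ)
    (hanti : StrictAntiOn ψ (Set.Ici 0))
    (hψ0 : ψ 0 = 1)
    (hlim : Tendsto ψ atTop (𝓝 0))
    (hrange : ∀ t ≥ (0:ℝ), 0 < ψ t ∧ ψ t ≤ 1)
    (hinv_left : ∀ t ≥ (0:ℝ), ψinv (ψ t) = t)
    (hinv_right : ∀ u ∈ Set.Ioc (0:ℝ) 1, 0 ≤ ψinv u ∧ ψ (ψinv u) = u)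
    (C : ℝ → ℝ → ℝ)
    (hCdef : ∀ u ∈ Set.Ioc (0:ℝ) 1, ∀ v ∈ Set.Ioc (0:ℝ) 1,
      C u v = ψ (ψinv u + ψinv v))
    (hCzero : ∀ u v : ℝ, u = 0 ∨ v = 0 → C u v = 0) :
    (∀ u ∈ Set.Icc (0:ℝ) 1, C u 1 = u ∧ C 1 u = u) ∧
      (∀ u₁ u₂ v₁ v₂ : ℝ, 0 ≤ u₁ → u₁ ≤ u₂ → u₂ ≤ 1 → 0 ≤ v₁ → v₁ ≤ v₂ → v₂ ≤ 1 →
        0 ≤ C u₂ v₂ - C u₁ v₂ - C u₂ v₁ + C u₁ v₁) := by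
  have hmem1 : (1:ℝ) ∈ Set.Ioc (0:ℝ) 1 := ⟨one_pos, le_rfl⟩
  have hψinv1 : ψinv 1 = 0 := by
    have := hinv_left 0 le_rfl
    rwa [hψ0] at this
  -- ψ is antitone (non-strict)
  have hanti' : ∀ x y : ℝ, 0 ≤ x → x ≤ y → ψ y ≤ ψ x := by
    intro x y hx hxy
    rcases eq_or_lt_of_le hxy with h | h
    · rw [h]
    · exact (hanti hx (hx.trans hxy) h).le
  -- ψinv is antitone on (0,1]
  have hinv_anti : ∀ u ∈ Set.Ioc (0:ℝ) 1, ∀ v ∈ Set.Ioc (0:ℝ) 1, u ≤ v → ψinv v ≤ ψinv u := by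
    intro u hu v hv huv
    by_contra hcon
    push_neg at hcon
    have h1 := hinv_right u hu
    have h2 := hinv_right v hv
    have := hanti h1.1 (h1.1.trans hcon.le) hcon
    rw [h1.2, h2.2] at this
    linarith
  constructor
  · -- margins
    intro u hu
    rcases eq_or_lt_of_le hu.1 with h0 | h0
    · constructor
      · rw [hCzero u 1 (Or.inl h0.symm)]; exact h0
      · rw [hCzero 1 u (Or.inr h0.symm)]; exact h0
    · have humem : u ∈ Set.Ioc (0:ℝ) 1 := ⟨h0, hu.2⟩
      have h1 := hinv_right u humem
      constructor
      · rw [hCdef u humem 1 hmem1, hψinv1, add_zero, h1.2]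
      · rw [hCdef 1 hmem1 u humem, hψinv1, zero_add, h1.2]
  · -- 2-increasing
    intro u₁ u₂ v₁ v₂ hu₁ hu₁₂ hu₂ hv₁ hv₁₂ hv₂
    rcases eq_or_lt_of_le (hu₁.trans hu₁₂) with hu20 | hu20
    · have hu10 : u₁ = 0 := le_antisymm (hu20 ▸ hu₁₂) hu₁
      rw [hCzero u₂ v₂ (Or.inl hu20.symm), hCzero u₁ v₂ (Or.inl hu10),
        hCzero u₂ v₁ (Or.inl hu20.symm), hCzero u₁ v₁ (Or.inl hu10)]
      norm_num
    rcases eq_or_lt_of_le (hv₁.trans hv₁₂) with hv20 | hv20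
    · have hv10 : v₁ = 0 := le_antisymm (hv20 ▸ hv₁₂) hv₁
      rw [hCzero u₂ v₂ (Or.inr hv20.symm), hCzero u₁ v₂ (Or.inr hv20.symm),
        hCzero u₂ v₁ (Or.inr hv10), hCzero u₁ v₁ (Or.inr hv10)]
      norm_num
    have hu2m : u₂ ∈ Set.Ioc (0:ℝ) 1 := ⟨hu20, hu₂⟩
    have hv2m : v₂ ∈ Set.Ioc (0:ℝ) 1 := ⟨hv20, hv₂⟩
    have hb := hinv_right u₂ hu2m
    have hd := hinv_right v₂ hv2m
    set b := ψinv u₂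
    set d := ψinv v₂
    rcases eq_or_lt_of_le hu₁ with hu10 | hu10
    · -- u₁ = 0
      rw [hCzero u₁ v₂ (Or.inl hu10.symm), hCzero u₁ v₁ (Or.inl hu10.symm)]
      rcases eq_or_lt_of_le hv₁ with hv10 | hv10
      · rw [hCzero u₂ v₁ (Or.inr hv10.symm)]
        rw [hCdef u₂ hu2m v₂ hv2m]
        have := (hrange (b + d) (by linarith [hb.1, hd.1])).1
        linarith
      · have hv1m : v₁ ∈ Set.Ioc (0:ℝ) 1 := ⟨hv10, hv₁₂.trans hv₂⟩
        have hc := hinv_right v₁ hv1m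
        rw [hCdef u₂ hu2m v₂ hv2m, hCdef u₂ hu2m v₁ hv1m]
        have hdc : d ≤ ψinv v₁ := hinv_anti v₁ hv1m v₂ hv2m hv₁₂
        have := hanti' (b + d) (b + ψinv v₁) (by linarith [hb.1, hd.1]) (by linarith)
        linarith
    · -- u₁ > 0
      have hu1m : u₁ ∈ Set.Ioc (0:ℝ) 1 := ⟨hu10, hu₁₂.trans hu₂⟩
      have ha := hinv_right u₁ hu1m
      set a := ψinv u₁
      have hba : b ≤ a := hinv_anti u₁ hu1m u₂ hu2m hu₁₂
      rcases eq_or_lt_of_le hv₁ with hv10 | hv10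
      · -- v₁ = 0
        rw [hCzero u₂ v₁ (Or.inr hv10.symm), hCzero u₁ v₁ (Or.inr hv10.symm)]
        rw [hCdef u₂ hu2m v₂ hv2m, hCdef u₁ hu1m v₂ hv2m]
        have := hanti' (b + d) (a + d) (by linarith [hb.1, hd.1]) (by linarith)
        linarith
      · -- main case
        have hv1m : v₁ ∈ Set.Ioc (0:ℝ) 1 := ⟨hv10, hv₁₂.trans hv₂⟩
        have hc := hinv_right v₁ hv1m
        set c := ψinv v₁
        have hdc : d ≤ c := hinv_anti v₁ hv1m v₂ hv2m hv₁₂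
        rw [hCdef u₂ hu2m v₂ hv2m, hCdef u₁ hu1m v₂ hv2m,
          hCdef u₂ hu2m v₁ hv1m, hCdef u₁ hu1m v₁ hv1m]
        have key := convex_four ψ hconv (b + d) (a + d) (b + c) (a + c)
          (by linarith [hb.1, hd.1]) (by linarith) (by linarith) (by ring)
        linarith
end
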